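/- Let X̃, X be metric spaces, p : X̃ → X a surjective map, and Γ a group acting on X̃ by isometries with p(γ·z) = p(z) for all γ, z, such that d_X(p(z), p(w)) = inf_{γ ∈ Γ} d_{X̃}(z, γ·w) for all z, w ∈ X̃. Let Y be a Banach space, X' ⊆ X, and F : X' → (nonempty compact convex subsets of Y) with F(x) convex and compact for each x. Suppose f : p⁻¹(X') → Y is a c-Lipschitz map with f(z) ∈ F(p(z)) for all z ∈ p⁻¹(X'). Define G(x) to be the closed convex hull of f(p⁻¹(x)). Then G(x) ⊆ F(x) for all x ∈ X', and d_H(G(x), G(y)) ≤ c·d_X(x, y) for all x, y ∈ X'. -/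

import Mathlib

/-- Proposition 2.1: given `p : X̃ → X` surjective with an isometric group action of `Γ`
satisfying `p (γ • z) = p z` and `d(p z, p w) = ⨅ γ, d(z, γ • w)`, a Banach space `Y`,
a set-valued map `F` into nonempty compact convex subsets of `Y` on `X' ⊆ X`, and a
`c`-Lipschitz selection `f` of the pullback `F ∘ p` on `p ⁻¹' X'`, the map
`G x := closed convex hull of f(p⁻¹(x))` satisfies `G x ⊆ F x` and
`d_H(G x, G y) ≤ c * d(x, y)` on `X'`. -/
theorem stmt_5 {Xt X Y : Type*} [MetricSpace Xt] [MetricSpace X]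
    [NormedAddCommGroup Y] [NormedSpace ℝ Y] [CompleteSpace Y]
    (p : Xt → X) (hp : Function.Surjective p)
    (Γ : Type*) [Group Γ] [MulAction Γ Xt]
    (hiso : ∀ γ : Γ, Isometry (fun z : Xt => γ • z))
    (hdeck : ∀ (γ : Γ) (z : Xt), p (γ • z) = p z)
    (hdist : ∀ z w : Xt, dist (p z) (p w) = ⨅ γ : Γ, dist z (γ • w))
    (X' : Set X) (F : X → Set Y)
    (hF : ∀ x ∈ X', (F x).Nonempty ∧ IsCompact (F x) ∧ Convex ℝ (F x))
    (f : Xt → Y) (c : ℝ) (hc : 0 ≤ c)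
    (hfLip : ∀ z ∈ p ⁻¹' X', ∀ w ∈ p ⁻¹' X', ‖f z - f w‖ ≤ c * dist z w)
    (hfsel : ∀ z ∈ p ⁻¹' X', f z ∈ F (p z))
    (G : X → Set Y) (hG : ∀ x, G x = closure (convexHull ℝ (f '' (p ⁻¹' {x})))) :
    (∀ x ∈ X', G x ⊆ F x) ∧
      (∀ x ∈ X', ∀ y ∈ X', Metric.hausdorffDist (G x) (G y) ≤ c * dist x y) := by
  -- notation
  have hSsub : ∀ x ∈ X', f '' (p ⁻¹' {x}) ⊆ F x := by
    rintro x hx v ⟨z, hz, rfl⟩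
    have hz' : p z = x := hz
    have : z ∈ p ⁻¹' X' := by simp [Set.mem_preimage, hz', hx]
    have := hfsel z this
    rwa [hz'] at this
  have part1 : ∀ x ∈ X', G x ⊆ F x := by
    intro x hx
    obtain ⟨-, hcomp, hconv⟩ := hF x hx
    rw [hG x]
    exact closure_minimal (convexHull_min (hSsub x hx) hconv) hcomp.isClosed
  refine ⟨part1, ?_⟩
  -- key estimate on the images
  have key : ∀ x ∈ X', ∀ y ∈ X', ∀ v ∈ f '' (p ⁻¹' {x}),
      EMetric.infEdist v (f '' (p ⁻¹' {y})) ≤ ENNReal.ofReal (c * dist x y) := by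
    rintro x hx y hy v ⟨z, hz, rfl⟩
    have hz' : p z = x := hz
    obtain ⟨w, hw⟩ := hp y
    refine ENNReal.le_of_forall_pos_le_add ?_
    intro ε hε _
    set δ : ℝ := (ε : ℝ) / (c + 1) with hδdef
    have hc1 : (0:ℝ) < c + 1 := by linarith
    have hδ : 0 < δ := div_pos (by exact_mod_cast hε) hc1
    have hinf : (⨅ γ : Γ, dist z (γ • w)) = dist x y := by
      rw [← hdist z w, hz', hw]
    have hlt : (⨅ γ : Γ, dist z (γ • w)) < dist x y + δ := by
      rw [hinf]; linarith
    obtain ⟨γ, hγ⟩ := exists_lt_of_ciInf_lt hlt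
    have hγw : γ • w ∈ p ⁻¹' {y} := by simp [Set.mem_preimage, hdeck, hw]
    have hzX : z ∈ p ⁻¹' X' := by simp [Set.mem_preimage, hz', hx]
    have hγwX : γ • w ∈ p ⁻¹' X' := by simp [Set.mem_preimage, hdeck, hw, hy]
    have hnorm : ‖f z - f (γ • w)‖ ≤ c * dist z (γ • w) := hfLip z hzX _ hγwX
    calc EMetric.infEdist (f z) (f '' (p ⁻¹' {y}))
        ≤ edist (f z) (f (γ • w)) :=
          EMetric.infEdist_le_edist_of_mem ⟨γ • w, hγw, rfl⟩
      _ = ENNReal.ofReal (dist (f z) (f (γ • w))) := by rw [edist_dist]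
      _ ≤ ENNReal.ofReal (c * (dist x y + δ)) := by
          apply ENNReal.ofReal_le_ofReal
          rw [dist_eq_norm]
          calc ‖f z - f (γ • w)‖ ≤ c * dist z (γ • w) := hnorm
            _ ≤ c * (dist x y + δ) := by
                apply mul_le_mul_of_nonneg_left (le_of_lt hγ) hc
      _ = ENNReal.ofReal (c * dist x y + c * δ) := by ring_nf
      _ ≤ ENNReal.ofReal (c * dist x y) + ENNReal.ofReal (c * δ) :=
          ENNReal.ofReal_add_le
      _ ≤ ENNReal.ofReal (c * dist x y) + ε := by
          gcongr
          have hcδ : c * δ ≤ (ε : ℝ) := by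
            have h1 : (c + 1) * δ = (ε : ℝ) := by
              rw [hδdef]; field_simp
            nlinarith [hδ.le]
          calc ENNReal.ofReal (c * δ) ≤ ENNReal.ofReal (ε : ℝ) :=
                ENNReal.ofReal_le_ofReal hcδ
            _ = ε := ENNReal.ofReal_coe_nnreal
  -- pass to G
  have keyG : ∀ x ∈ X', ∀ y ∈ X', ∀ v ∈ G x,
      EMetric.infEdist v (G y) ≤ ENNReal.ofReal (c * dist x y) := by
    intro x hx y hy
    have hsub : f '' (p ⁻¹' {x}) ⊆ Metric.cthickening (c * dist x y) (G y) := by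
      intro v hv
      rw [Metric.mem_cthickening_iff]
      calc EMetric.infEdist v (G y) ≤ EMetric.infEdist v (f '' (p ⁻¹' {y})) := by
            apply EMetric.infEdist_anti
            rw [hG y]
            exact (subset_convexHull ℝ _).trans subset_closure
        _ ≤ ENNReal.ofReal (c * dist x y) := key x hx y hy v hv
    have hconvG : Convex ℝ (G y) := by
      rw [hG y]; exact (convex_convexHull ℝ _).closure
    have hsub2 : G x ⊆ Metric.cthickening (c * dist x y) (G y) := by
      rw [hG x]
      exact closure_minimal (convexHull_min hsub (hconvG.cthickening _))
        Metric.isClosed_cthickening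
    intro v hv
    refine Metric.mem_cthickening_iff.mp ?_
    exact hsub2 hv
  intro x hx y hy
  have hE : EMetric.hausdorffEdist (G x) (G y) ≤ ENNReal.ofReal (c * dist x y) := by
    apply EMetric.hausdorffEdist_le_of_infEdist
    · exact keyG x hx y hy
    · intro v hv
      rw [dist_comm x y] at *
      exact keyG y hy x hx v hv
  have h0 : 0 ≤ c * dist x y := mul_nonneg hc dist_nonneg
  rw [Metric.hausdorffDist]
  exact ENNReal.toReal_le_of_le_ofReal h0 hE
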